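/- In a positively weighted directed graph G, if all shortest-path distances into v are distinct and u is the i-th nearest neighbor of v (i ≥ 1, u ≠ v), then there exists a vertex w with an edge (w, v) ∈ E such that d(u, v) = d(u, w) + weight(w, v) and u is among the first i nearest neighbors of w. -/

import Mathlib

open ENNReal

/-- Total weight of the walk starting at `a` and following the vertex list `l`. -/
noncomputable def listCost {V : Type*} (w : V → V → ℝ≥0∞) : V → List V → ℝ≥0∞
  | _, [] => 0
  | a, b :: l => w a b + listCost w b l

/-- Shortest-path distance from `u` to `v` in the weighted digraph with
weight function `w` (weight `⊤` means no edge). -/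
noncomputable def spDist {V : Type*} (w : V → V → ℝ≥0∞) (u v : V) : ℝ≥0∞ :=
  ⨅ l : {l : List V // (u :: l).getLast (List.cons_ne_nil u l) = v},
    listCost w u l.1

lemma listCost_append {V : Type*} (w : V → V → ℝ≥0∞) (b : V) :
    ∀ (l : List V) (a : V),
      listCost w a (l ++ [b]) = listCost w a l + w ((a :: l).getLast (List.cons_ne_nil a l)) b := by
  intro l
  induction l with
  | nil => intro a; simp [listCost]
  | cons c t ih =>
      intro a
      show w a c + listCost w c (t ++ [b]) = (w a c + listCost w c t) + _
      rw [ih c, ← add_assoc, List.getLast_cons (List.cons_ne_nil c t)]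

lemma spDist_le_listCost {V : Type*} (w : V → V → ℝ≥0∞) (u x : V) (l : List V)
    (h : (u :: l).getLast (List.cons_ne_nil u l) = x) :
    spDist w u x ≤ listCost w u l :=
  iInf_le (fun l : {l : List V // (u :: l).getLast (List.cons_ne_nil u l) = x} => listCost w u l.1) ⟨l, h⟩

lemma spDist_triangle {V : Type*} (w : V → V → ℝ≥0∞) (u x v : V) :
    spDist w u v ≤ spDist w u x + w x v := by
  conv_rhs => rw [spDist, ENNReal.iInf_add]
  refine le_iInf fun ⟨l, hl⟩ => ?_
  have h2 : ((u :: (l ++ [v])).getLast (List.cons_ne_nil _ _)) = v := by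
    simp [List.getLast_append]
  calc spDist w u v ≤ listCost w u (l ++ [v]) := spDist_le_listCost w u v _ h2
    _ = listCost w u l + w ((u :: l).getLast (List.cons_ne_nil u l)) v := listCost_append w v l u
    _ = listCost w u l + w x v := by rw [hl]

lemma spDist_lower {V : Type*} (w : V → V → ℝ≥0∞) (u v : V) (huv : u ≠ v) :
    ⨅ x : V, (spDist w u x + w x v) ≤ spDist w u v := by
  refine le_iInf fun ⟨l, hl⟩ => ?_
  rcases List.eq_nil_or_concat l with rfl | ⟨l', b, rfl⟩
  · exact absurd hl huv
  · have hb : b = v := by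
      simpa [List.concat_eq_append, List.getLast_append] using hl
    subst hb
    show ⨅ x : V, (spDist w u x + w x b) ≤ listCost w u (l'.concat b)
    rw [List.concat_eq_append, listCost_append]
    calc ⨅ x : V, (spDist w u x + w x b)
        ≤ spDist w u ((u :: l').getLast (List.cons_ne_nil u l')) + w ((u :: l').getLast (List.cons_ne_nil u l')) b := iInf_le _ _
      _ ≤ listCost w u l' + w ((u :: l').getLast (List.cons_ne_nil u l')) b := by
          gcongr
          exact spDist_le_listCost w u _ l' rfl

theorem stmt_12 {V : Type*} [Fintype V] [DecidableEq V]
    (w : V → V → ℝ≥0∞) (hpos : ∀ a b, 0 < w a b)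
    (v : V) (hdist : Function.Injective fun x => spDist w x v)
    (u : V) (huv : u ≠ v) (i : ℕ) (hi : 1 ≤ i)
    (hfin : spDist w u v < ⊤)
    (hu : (Finset.univ.filter fun c => spDist w c v < spDist w u v).card = i - 1) :
    ∃ x : V, w x v < ⊤ ∧ spDist w u v = spDist w u x + w x v ∧
      (Finset.univ.filter fun c => spDist w c x < spDist w u x).card ≤ i - 1 := by
  have hne : Nonempty V := ⟨u⟩
  obtain ⟨x, hx⟩ := Finite.exists_min (fun x : V => spDist w u x + w x v)
  have heq : spDist w u v = spDist w u x + w x v := by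
    refine le_antisymm (spDist_triangle w u x v) ?_
    calc spDist w u x + w x v ≤ ⨅ y : V, (spDist w u y + w y v) := le_iInf hx
      _ ≤ spDist w u v := spDist_lower w u v huv
  have hwfin : w x v < ⊤ := lt_of_le_of_lt (le_add_self.trans heq.ge) hfin
  refine ⟨x, hwfin, heq, ?_⟩
  rw [← hu]
  apply Finset.card_le_card
  intro c hc
  simp only [Finset.mem_filter, Finset.mem_univ, true_and] at hc ⊢
  calc spDist w c v ≤ spDist w c x + w x v := spDist_triangle w c x v
    _ < spDist w u x + w x v := ENNReal.add_lt_add_right hwfin.ne hc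
    _ = spDist w u v := heq.symm
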